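/- Let p be an odd prime, k ≥ 1 and n ≥ 1, and let B be a p^k-form of rank n with mod-p reduction B_red. Then the mod-p reduction homomorphism π : O(B) → O(B_red) is surjective, and its kernel has exactly p^{(k−1)·n(n−1)/2} elements. -/

import Mathlib

open Matrix

variable {ι : Type*} [Fintype ι] [DecidableEq ι] {R : Type*} [CommRing R]

/-- The orthogonal group of a bilinear form given by the matrix `B`:
the subgroup of invertible matrices `A` with `Aᵀ * B * A = B`. -/
def OGroup (B : Matrix ι ι R) : Subgroup (Matrix ι ι R)ˣ where
  carrier := {A | ((A : (Matrix ι ι R)ˣ) : Matrix ι ι R)ᵀ * B * A = B}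
  one_mem' := by simp
  mul_mem' := by
    intro a b ha hb
    simp only [Set.mem_setOf_eq, Units.val_mul, Matrix.transpose_mul] at *
    calc ((b : Matrix ι ι R)ᵀ * (a : Matrix ι ι R)ᵀ) * B * ((a : Matrix ι ι R) * (b : Matrix ι ι R))
        = (b : Matrix ι ι R)ᵀ * ((a : Matrix ι ι R)ᵀ * B * (a : Matrix ι ι R)) * (b : Matrix ι ι R) := by
          simp only [Matrix.mul_assoc]
      _ = B := by rw [ha]; exact hb
  inv_mem' := by
    intro a ha
    simp only [Set.mem_setOf_eq] at *
    have h1 : ((a⁻¹ : (Matrix ι ι R)ˣ) : Matrix ι ι R)ᵀ * ((a : Matrix ι ι R)ᵀ * B * (a : Matrix ι ι R)) * ((a⁻¹ : (Matrix ι ι R)ˣ) : Matrix ι ι R) = B := by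
      calc ((a⁻¹ : (Matrix ι ι R)ˣ) : Matrix ι ι R)ᵀ * ((a : Matrix ι ι R)ᵀ * B * (a : Matrix ι ι R)) * ((a⁻¹ : (Matrix ι ι R)ˣ) : Matrix ι ι R)
          = ((a : Matrix ι ι R) * ((a⁻¹ : (Matrix ι ι R)ˣ) : Matrix ι ι R))ᵀ * B * ((a : Matrix ι ι R) * ((a⁻¹ : (Matrix ι ι R)ˣ) : Matrix ι ι R)) := by
            simp only [Matrix.transpose_mul, Matrix.mul_assoc]
        _ = B := by
            rw [← Units.val_mul, mul_inv_cancel]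
            simp
    rw [ha] at h1
    exact h1

lemma mem_OGroup_map {S : Type*} [CommRing S] (g : R →+* S)
    (B : Matrix ι ι R) (x : (Matrix ι ι R)ˣ) (hx : x ∈ OGroup B) :
    Units.map (g.mapMatrix : Matrix ι ι R →+* Matrix ι ι S).toMonoidHom x ∈
      OGroup (B.map g) := by
  have hx' : ((x : Matrix ι ι R))ᵀ * B * (x : Matrix ι ι R) = B := hx
  have h2 : ((x : Matrix ι ι R)ᵀ * B * (x : Matrix ι ι R)).map g = B.map g := by rw [hx']
  show (((x : Matrix ι ι R).map g)ᵀ) * B.map g * ((x : Matrix ι ι R).map g) = B.map g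
  rw [← Matrix.transpose_map, ← Matrix.map_mul, ← Matrix.map_mul]
  exact h2

/-- Mod-`p` reduction homomorphism `O(B) → O(B_red)`. -/
def redPi (p k : ℕ) (hk : k ≠ 0) {n : ℕ} (B : Matrix (Fin n) (Fin n) (ZMod (p ^ k))) :
    OGroup B →* OGroup (B.map (ZMod.castHom (dvd_pow_self p hk) (ZMod p))) :=
  MonoidHom.codRestrict
    ((Units.map ((ZMod.castHom (dvd_pow_self p hk) (ZMod p)).mapMatrix :
        Matrix (Fin n) (Fin n) (ZMod (p ^ k)) →+* Matrix (Fin n) (Fin n) (ZMod p)).toMonoidHom).comp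
      (OGroup B).subtype)
    (OGroup (B.map (ZMod.castHom (dvd_pow_self p hk) (ZMod p))))
    (fun x => mem_OGroup_map _ B x x.2)



section zmodaux
variable {p k : ℕ} (hp : p.Prime) (hk : k ≠ 0)
include hp hk

omit hk in lemma pk_ne : NeZero (p^k) := ⟨pow_ne_zero _ hp.ne_zero⟩

lemma dvd_iff_val_dvd (x : ZMod (p^k)) : (p : ZMod (p^k)) ∣ x ↔ p ∣ x.val := by
  haveI := pk_ne (k := k) hp
  constructor
  · rintro ⟨c, rfl⟩
    have : ((p : ZMod (p^k)) * c) = ((p * c.val : ℕ) : ZMod (p^k)) := by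
      push_cast
      rw [ZMod.natCast_val, ZMod.cast_id]
    rw [this, ZMod.val_natCast]
    exact (Nat.dvd_mod_iff (dvd_pow_self p hk)).mpr (Nat.dvd_mul_right p c.val)
  · rintro ⟨m, hm⟩
    refine ⟨(m : ZMod (p^k)), ?_⟩
    have : x = ((x.val : ℕ) : ZMod (p^k)) := (ZMod.natCast_rightInverse x).symm
    rw [this, hm]
    push_cast
    ring

lemma red_eq_zero_iff (x : ZMod (p^k)) :
    ZMod.castHom (dvd_pow_self p hk) (ZMod p) x = 0 ↔ p ∣ x.val := by
  haveI := pk_ne (k := k) hp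
  have hx : x = ((x.val : ℕ) : ZMod (p^k)) := (ZMod.natCast_rightInverse x).symm
  conv_lhs => rw [hx]
  rw [map_natCast]
  exact ZMod.natCast_eq_zero_iff _ _

lemma red_eq_zero_iff' (x : ZMod (p^k)) :
    ZMod.castHom (dvd_pow_self p hk) (ZMod p) x = 0 ↔ (p : ZMod (p^k)) ∣ x := by
  rw [red_eq_zero_iff hp hk, dvd_iff_val_dvd hp hk]

lemma isUnit_iff_red (x : ZMod (p^k)) :
    IsUnit x ↔ ZMod.castHom (dvd_pow_self p hk) (ZMod p) x ≠ 0 := by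
  haveI := pk_ne (k := k) hp
  rw [ne_eq, red_eq_zero_iff hp hk]
  have hx : x = ((x.val : ℕ) : ZMod (p^k)) := (ZMod.natCast_rightInverse x).symm
  constructor
  · intro h hdvd
    rw [hx] at h
    rw [ZMod.isUnit_iff_coprime] at h
    have := (Nat.coprime_pow_right_iff (Nat.pos_of_ne_zero hk) _ _).mp h
    exact (Nat.Prime.coprime_iff_not_dvd hp).mp this.symm hdvd
  · intro h
    rw [hx, ZMod.isUnit_iff_coprime]
    exact Nat.Coprime.pow_right _ (((Nat.Prime.coprime_iff_not_dvd hp).mpr h).symm)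

end zmodaux


lemma card_dvd_subtype {p k : ℕ} (hp : p.Prime) (hk : k ≠ 0) :
    Nat.card {x : ZMod (p^k) // (p : ZMod (p^k)) ∣ x} = p ^ (k-1) := by
  haveI : NeZero (p^k) := ⟨pow_ne_zero _ hp.ne_zero⟩
  have hppos : 0 < p := hp.pos
  have hpk : p ^ (k-1) * p = p ^ k := by
    rw [← pow_succ]; congr 1; omega
  have e : Fin (p^(k-1)) ≃ {x : ZMod (p^k) // (p : ZMod (p^k)) ∣ x} := by
    refine ⟨fun m => ⟨((p * m.val : ℕ) : ZMod (p^k)), ⟨((m.val : ℕ) : ZMod (p^k)), by push_cast; ring⟩⟩,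
      fun x => ⟨x.1.val / p, ?_⟩, ?_, ?_⟩
    · have := ZMod.val_lt x.1
      rw [Nat.div_lt_iff_lt_mul hppos, hpk]
      exact this
    · intro m
      have hlt : p * m.val < p ^ k := by
        rw [← hpk]
        calc p * m.val < p * p^(k-1) := (Nat.mul_lt_mul_left hppos).mpr m.isLt
        _ = p^(k-1) * p := by ring
      ext
      simp only [ZMod.val_natCast, Nat.mod_eq_of_lt hlt]
      exact Nat.mul_div_cancel_left _ hppos
    · rintro ⟨x, hx⟩
      have hv : p ∣ x.val := (dvd_iff_val_dvd hp hk x).mp hx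
      ext
      simp only [Nat.mul_div_cancel' hv]
      exact ZMod.natCast_rightInverse x
  rw [← Nat.card_congr e, Nat.card_eq_fintype_card, Fintype.card_fin]

lemma card_lt_pairs (n : ℕ) :
    Nat.card {ij : Fin n × Fin n // ij.1 < ij.2} = n * (n-1) / 2 := by
  have e : {ij : Fin n × Fin n // ij.1 < ij.2} ≃ Σ j : Fin n, Fin j.val := by
    refine ⟨fun x => ⟨x.1.2, ⟨x.1.1.val, x.2⟩⟩,
      fun x => ⟨(⟨x.2.val, lt_trans x.2.isLt x.1.isLt⟩, x.1), x.2.isLt⟩, ?_, ?_⟩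
    · rintro ⟨⟨i, j⟩, h⟩; rfl
    · rintro ⟨j, m⟩; rfl
  rw [Nat.card_congr e, Nat.card_eq_fintype_card, Fintype.card_sigma]
  simp only [Fintype.card_fin]
  rw [show (∑ x : Fin n, (x:ℕ)) = ∑ i ∈ Finset.range n, i from Fin.sum_univ_eq_sum_range (fun i => i) n]
  exact Finset.sum_range_id n



lemma dvd_mul_entries_left {n : ℕ} {R : Type*} [CommRing R] (c : R) (M N : Matrix (Fin n) (Fin n) R)
    (h : ∀ i j, c ∣ M i j) (i j : Fin n) : c ∣ (M * N) i j := by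
  rw [Matrix.mul_apply]
  exact Finset.dvd_sum (fun l _ => (h i l).mul_right _)

lemma dvd_mul_entries_right {n : ℕ} {R : Type*} [CommRing R] (c : R) (M N : Matrix (Fin n) (Fin n) R)
    (h : ∀ i j, c ∣ N i j) (i j : Fin n) : c ∣ (M * N) i j := by
  rw [Matrix.mul_apply]
  exact Finset.dvd_sum (fun l _ => (h l j).mul_left _)

lemma dvd_mul_entries_both {n : ℕ} {R : Type*} [CommRing R] (c d : R) (M N : Matrix (Fin n) (Fin n) R)
    (hM : ∀ i j, c ∣ M i j) (hN : ∀ i j, d ∣ N i j) (i j : Fin n) : c * d ∣ (M * N) i j := by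
  rw [Matrix.mul_apply]
  exact Finset.dvd_sum (fun l _ => mul_dvd_mul (hM i l) (hN l j))

lemma two_isUnit {p k : ℕ} (hp : p.Prime) (hp2 : p ≠ 2) (hk : k ≠ 0) : IsUnit (2 : ZMod (p^k)) := by
  rw [show (2 : ZMod (p^k)) = ((2:ℕ) : ZMod (p^k)) by push_cast; ring,
    isUnit_iff_red hp hk, map_natCast, ne_eq, ZMod.natCast_eq_zero_iff]
  intro hdvd
  exact hp2 ((Nat.prime_dvd_prime_iff_eq hp Nat.prime_two).mp hdvd)

lemma card_skew {p k n : ℕ} (hp : p.Prime) (hp2 : p ≠ 2) (hk : k ≠ 0) :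
    Nat.card {M : Matrix (Fin n) (Fin n) (ZMod (p^k)) //
        (∀ i j, (p : ZMod (p^k)) ∣ M i j) ∧ Mᵀ = -M}
      = p ^ ((k-1) * (n*(n-1)/2)) := by
  set R := ZMod (p^k)
  have h2 : IsUnit (2 : R) := two_isUnit hp hp2 hk
  have e : {M : Matrix (Fin n) (Fin n) R // (∀ i j, (p : R) ∣ M i j) ∧ Mᵀ = -M}
      ≃ ({ij : Fin n × Fin n // ij.1 < ij.2} → {x : R // (p : R) ∣ x}) := by
    refine ⟨fun M ij => ⟨M.1 ij.1.1 ij.1.2, M.2.1 _ _⟩,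
      fun f => ⟨Matrix.of (fun i j =>
        if h : i < j then (f ⟨(i,j),h⟩ : R)
        else if h' : j < i then -(f ⟨(j,i),h'⟩ : R) else 0), ?_, ?_⟩, ?_, ?_⟩
    · intro i j
      dsimp only [Matrix.of_apply]
      split_ifs
      · exact (f _).2
      · exact dvd_neg.mpr (f _).2
      · exact dvd_zero _
    · ext i j
      simp only [Matrix.transpose_apply, Matrix.neg_apply, Matrix.of_apply]
      rcases lt_trichotomy i j with h | h | h
      · rw [dif_neg (asymm h), dif_pos h, dif_pos h]
      · subst h
        rw [dif_neg (lt_irrefl i), dif_neg (lt_irrefl i), neg_zero]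
      · rw [dif_pos h, dif_neg (asymm h), dif_pos h, neg_neg]
    · rintro ⟨M, hdvd, hskew⟩
      ext i j
      simp only [Matrix.of_apply]
      rcases lt_trichotomy i j with h | h | h
      · rw [dif_pos h]
      · subst h
        rw [dif_neg (lt_irrefl i), dif_neg (lt_irrefl i)]
        have hd : M i i + M i i = 0 := by
          have := congrFun (congrFun hskew i) i
          simp only [Matrix.transpose_apply, Matrix.neg_apply] at this
          linear_combination this
        have : (2 : R) * M i i = 0 := by rw [two_mul]; exact hd
        exact ((h2.mul_right_eq_zero).mp this).symm
      · rw [dif_neg (asymm h), dif_pos h]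
        have := congrFun (congrFun hskew j) i
        simp only [Matrix.transpose_apply, Matrix.neg_apply] at this
        linear_combination -this
    · intro f
      funext ij
      obtain ⟨⟨i, j⟩, hij⟩ := ij
      apply Subtype.ext
      simp only [Matrix.of_apply]
      rw [dif_pos hij]
  rw [Nat.card_congr e, Nat.card_fun, card_dvd_subtype hp hk, card_lt_pairs, ← pow_mul]

section cayley
variable {n : ℕ} {R : Type*} [CommRing R]

/-- Cayley transform. -/
noncomputable def cayley (A : Matrix (Fin n) (Fin n) R) : Matrix (Fin n) (Fin n) R :=
  (1 - A) * (1 + A)⁻¹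

lemma one_add_cayley (A : Matrix (Fin n) (Fin n) R) (h : IsUnit (1+A).det) :
    1 + cayley A = (2:R) • (1+A)⁻¹ := by
  have h1 : (1:Matrix (Fin n) (Fin n) R) = (1+A)*(1+A)⁻¹ := (Matrix.mul_nonsing_inv _ h).symm
  calc 1 + cayley A = (1+A)*(1+A)⁻¹ + (1-A)*(1+A)⁻¹ := by rw [← h1]; rfl
  _ = ((1+A) + (1-A)) * (1+A)⁻¹ := (Matrix.add_mul _ _ _).symm
  _ = ((2:R) • (1:Matrix (Fin n) (Fin n) R)) * (1+A)⁻¹ := by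
      congr 1
      rw [two_smul]; abel
  _ = (2:R) • (1+A)⁻¹ := by rw [Matrix.smul_mul, one_mul]

lemma one_sub_cayley (A : Matrix (Fin n) (Fin n) R) (h : IsUnit (1+A).det) :
    1 - cayley A = (2:R) • (A * (1+A)⁻¹) := by
  have h1 : (1:Matrix (Fin n) (Fin n) R) = (1+A)*(1+A)⁻¹ := (Matrix.mul_nonsing_inv _ h).symm
  calc 1 - cayley A = (1+A)*(1+A)⁻¹ - (1-A)*(1+A)⁻¹ := by rw [← h1]; rfl
  _ = ((1+A) - (1-A)) * (1+A)⁻¹ := (Matrix.sub_mul _ _ _).symm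
  _ = ((2:R) • A) * (1+A)⁻¹ := by
      congr 1
      rw [two_smul]; abel
  _ = (2:R) • (A * (1+A)⁻¹) := by rw [Matrix.smul_mul]

lemma isUnit_det_one_add_cayley (A : Matrix (Fin n) (Fin n) R) (h2 : IsUnit (2:R))
    (h : IsUnit (1+A).det) : IsUnit (1 + cayley A).det := by
  rw [one_add_cayley A h, Matrix.det_smul, Fintype.card_fin]
  exact (h2.pow n).mul (Matrix.isUnit_nonsing_inv_det _ h)

lemma cayley_cayley (A : Matrix (Fin n) (Fin n) R) (h2 : IsUnit (2:R))
    (h : IsUnit (1+A).det) : cayley (cayley A) = A := by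
  obtain ⟨u2, hu2⟩ := h2
  have hs : (↑u2⁻¹ : R) * 2 = 1 := by rw [← hu2, Units.inv_mul]
  have hinv : (1 + cayley A)⁻¹ = (↑u2⁻¹ : R) • (1+A) := by
    apply Matrix.inv_eq_right_inv
    rw [one_add_cayley A h, Matrix.smul_mul, Matrix.mul_smul,
      Matrix.nonsing_inv_mul _ h, smul_smul, mul_comm (2:R), hs, one_smul]
  rw [cayley, one_sub_cayley A h, hinv, Matrix.smul_mul, Matrix.mul_smul, smul_smul,
    mul_comm (2:R), hs, one_smul, Matrix.mul_assoc, Matrix.nonsing_inv_mul _ h, mul_one]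

lemma conj_eq_zero {P Q X : Matrix (Fin n) (Fin n) R} (hP : IsUnit P.det) (hQ : IsUnit Q.det)
    (h : P * X * Q = 0) : X = 0 := by
  have key : P⁻¹ * (P * X * Q) * Q⁻¹ = X := by
    calc P⁻¹ * (P * X * Q) * Q⁻¹ = (P⁻¹ * P) * X * (Q * Q⁻¹) := by
          simp only [Matrix.mul_assoc]
      _ = X := by
          rw [Matrix.nonsing_inv_mul _ hP, Matrix.mul_nonsing_inv _ hQ, one_mul, mul_one]
  rw [← key, h, Matrix.mul_zero, Matrix.zero_mul]

lemma cayley_isometry_iff (B A : Matrix (Fin n) (Fin n) R) (h2 : IsUnit (2:R))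
    (h : IsUnit (1+A).det) :
    Aᵀ * B * A = B ↔ (cayley A)ᵀ * B + B * (cayley A) = 0 := by
  set T := cayley A with hT
  have hAT : IsUnit (1+Aᵀ).det := by
    have : (1+Aᵀ) = (1+A)ᵀ := by rw [Matrix.transpose_add, Matrix.transpose_one]
    rw [this, Matrix.det_transpose]; exact h
  have e2 : T * (1+A) = 1 - A := by
    rw [hT, cayley, Matrix.mul_assoc, Matrix.nonsing_inv_mul _ h, mul_one]
  have e1 : (1+Aᵀ) * Tᵀ = 1 - Aᵀ := by
    have := congrArg Matrix.transpose e2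
    rw [Matrix.transpose_mul, Matrix.transpose_add, Matrix.transpose_one,
      Matrix.transpose_sub, Matrix.transpose_one] at this
    exact this
  have key : (1+Aᵀ) * (Tᵀ*B + B*T) * (1+A)
      = (B - Aᵀ*B*A) + (B - Aᵀ*B*A) := by
    have expand : (1+Aᵀ) * (Tᵀ*B + B*T) * (1+A)
        = ((1+Aᵀ)*Tᵀ)*(B*(1+A)) + ((1+Aᵀ)*B)*(T*(1+A)) := by noncomm_ring
    rw [expand, e1, e2]
    noncomm_ring
  constructor
  · intro hiso
    apply conj_eq_zero hAT h
    rw [key, hiso]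
    abel
  · intro hskew
    have := key.symm
    rw [hskew, Matrix.mul_zero, Matrix.zero_mul] at this
    have h20 : ∀ i j, (B - Aᵀ*B*A) i j = 0 := by
      intro i j
      have hij := congrFun (congrFun this i) j
      simp only [Matrix.add_apply, Matrix.zero_apply] at hij
      have : (2:R) * (B - Aᵀ*B*A) i j = 0 := by rw [two_mul]; exact hij
      exact (h2.mul_right_eq_zero).mp this
    have : B - Aᵀ*B*A = 0 := by ext i j; exact h20 i j
    have := sub_eq_zero.mp this
    exact this.symm

lemma map_nonsing_inv {S : Type*} [CommRing S] (g : R →+* S) (M : Matrix (Fin n) (Fin n) R)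
    (h : IsUnit M.det) : (M⁻¹).map g = (M.map g)⁻¹ := by
  symm
  apply Matrix.inv_eq_right_inv
  rw [← Matrix.map_mul, Matrix.mul_nonsing_inv _ h, Matrix.map_one _ (map_zero g) (map_one g)]

end cayley

section newton
variable {p k n : ℕ}

lemma entries_dvd_map_red_eq_zero (hp : p.Prime) (hk : k ≠ 0)
    (Y : Matrix (Fin n) (Fin n) (ZMod (p^k))) (h : ∀ i j, (p : ZMod (p^k)) ∣ Y i j) :
    Y.map (ZMod.castHom (dvd_pow_self p hk) (ZMod p)) = 0 := by
  ext i j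
  rw [Matrix.map_apply]
  exact (red_eq_zero_iff' hp hk _).mpr (h i j)

lemma isUnit_det_of_red (hp : p.Prime) (hk : k ≠ 0)
    (M : Matrix (Fin n) (Fin n) (ZMod (p^k)))
    (h : IsUnit ((M.map (ZMod.castHom (dvd_pow_self p hk) (ZMod p))).det)) :
    IsUnit M.det := by
  haveI : Fact p.Prime := ⟨hp⟩
  rw [isUnit_iff_red hp hk]
  intro h0
  have : (ZMod.castHom (dvd_pow_self p hk) (ZMod p)) M.det
      = (M.map (ZMod.castHom (dvd_pow_self p hk) (ZMod p))).det := by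
    rw [RingHom.map_det]; rfl
  rw [h0] at this
  rw [← this] at h
  exact (by simp : ¬ IsUnit (0 : ZMod p)) h

lemma newton_lift (hp : p.Prime) (hp2 : p ≠ 2) (hk : k ≠ 0)
    (B : Matrix (Fin n) (Fin n) (ZMod (p^k))) (hB : Bᵀ = B) (hdet : IsUnit B.det) :
    ∀ m j, 1 ≤ j → k ≤ j + m → ∀ A : Matrix (Fin n) (Fin n) (ZMod (p^k)),
      IsUnit A.det →
      (∀ i i', (p : ZMod (p^k))^j ∣ (Aᵀ*B*A - B) i i') →
      ∃ A', A'ᵀ*B*A' = B ∧ IsUnit A'.det ∧ ∀ i i', (p : ZMod (p^k))^j ∣ (A' - A) i i' := by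
  set g := ZMod.castHom (dvd_pow_self p hk) (ZMod p) with hg
  haveI : Fact p.Prime := ⟨hp⟩
  intro m
  induction m with
  | zero =>
    intro j _ hkj A hA hC
    have hpj : ((p:ZMod (p^k)))^j = 0 := by
      have : ((p^j : ℕ) : ZMod (p^k)) = 0 := by
        rw [ZMod.natCast_eq_zero_iff]
        exact pow_dvd_pow p (by omega)
      push_cast at this
      exact this
    refine ⟨A, ?_, hA, fun i i' => by rw [sub_self]; exact dvd_zero _⟩
    have : Aᵀ*B*A - B = 0 := by
      ext i i'
      have := hC i i'
      rw [hpj, zero_dvd_iff] at this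
      exact this
    exact sub_eq_zero.mp this
  | succ m ih =>
    intro j hj hkj A hA hC
    set G := Aᵀ*B*A with hG
    set C := G - B with hCdef
    have hGdet : IsUnit G.det := by
      rw [hG, Matrix.det_mul, Matrix.det_mul, Matrix.det_transpose]
      exact (hA.mul hdet).mul hA
    have hGsymm : Gᵀ = G := by
      rw [hG, Matrix.transpose_mul, Matrix.transpose_mul, Matrix.transpose_transpose, hB,
        Matrix.mul_assoc]
    have hCsymm : Cᵀ = C := by rw [hCdef, Matrix.transpose_sub, hGsymm, hB]
    have hGinvsymm : (G⁻¹)ᵀ = G⁻¹ := by rw [Matrix.transpose_nonsing_inv, hGsymm]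
    obtain ⟨u2, hu2⟩ := two_isUnit hp hp2 hk
    set h2 : ZMod (p^k) := (↑u2⁻¹ : ZMod (p^k)) with hh2
    have hinv2 : h2 * 2 = 1 := by rw [hh2, ← hu2, Units.inv_mul]
    set Y : Matrix (Fin n) (Fin n) (ZMod (p^k)) := -(h2 • (G⁻¹ * C)) with hY
    set A'' := A * (1 + Y) with hA''
    have hGY : G * Y = -(h2 • C) := by
      rw [hY, Matrix.mul_neg, Matrix.mul_smul, ← Matrix.mul_assoc,
        Matrix.mul_nonsing_inv _ hGdet, Matrix.one_mul]
    have hYT : Yᵀ = -(h2 • (C * G⁻¹)) := by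
      rw [hY, Matrix.transpose_neg, Matrix.transpose_smul, Matrix.transpose_mul, hCsymm,
        hGinvsymm]
    have hYG : Yᵀ * G = -(h2 • C) := by
      rw [hYT, Matrix.neg_mul, Matrix.smul_mul, Matrix.mul_assoc,
        Matrix.nonsing_inv_mul _ hGdet, Matrix.mul_one]
    have hiso'' : A''ᵀ*B*A'' - B = Yᵀ * (G * Y) := by
      have e1 : A''ᵀ*B*A'' = (1+Yᵀ)*G*(1+Y) := by
        rw [hA'', Matrix.transpose_mul, Matrix.transpose_add, Matrix.transpose_one, hG]
        simp only [Matrix.mul_assoc]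
      have e2 : (1+Yᵀ)*G*(1+Y) = G + Yᵀ*G + G*Y + Yᵀ*(G*Y) := by noncomm_ring
      have e3 : h2 • C + h2 • C = C := by
        rw [← add_smul]
        have h22 : h2 + h2 = h2 * 2 := by ring
        rw [h22, hinv2, one_smul]
      have hsum : Yᵀ*G + G*Y = -C := by
        rw [hYG, hGY, ← neg_add, e3]
      rw [e1, e2]
      have e4 : G + Yᵀ*G + G*Y + Yᵀ*(G*Y) - B = (Yᵀ*G + G*Y) + C + Yᵀ*(G*Y) := by
        rw [hCdef]; abel
      rw [e4, hsum]
      abel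
    have hYdvd : ∀ i i', (p:ZMod (p^k))^j ∣ Y i i' := by
      intro i i'
      rw [hY]
      simp only [Matrix.neg_apply, Matrix.smul_apply, smul_eq_mul]
      apply dvd_neg.mpr
      exact (dvd_mul_entries_right _ G⁻¹ C (fun a b => hC a b) i i').mul_left h2
    have hYmap0 : Y.map g = 0 := by
      apply entries_dvd_map_red_eq_zero hp hk
      intro i i'
      exact dvd_trans (dvd_pow_self (p:ZMod (p^k)) (by omega : j ≠ 0)) (hYdvd i i')
    have hAred : IsUnit ((A.map g).det) := by
      have := hA.map g
      rwa [RingHom.map_det, RingHom.mapMatrix_apply] at this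
    have hA''det : IsUnit A''.det := by
      apply isUnit_det_of_red hp hk
      have e : A''.map g = (A.map g) * ((1:Matrix (Fin n) (Fin n) (ZMod (p^k))) + Y).map g := by
        rw [hA'', Matrix.map_mul]
      have e2 : ((1:Matrix (Fin n) (Fin n) (ZMod (p^k))) + Y).map g = 1 := by
        show ((g.mapMatrix) ((1:Matrix (Fin n) (Fin n) (ZMod (p^k))) + Y) : Matrix (Fin n) (Fin n) (ZMod p)) = 1
        rw [map_add, _root_.map_one]
        show (1:Matrix (Fin n) (Fin n) (ZMod p)) + Y.map g = 1
        rw [hYmap0, add_zero]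
      rw [e, e2, Matrix.mul_one]
      exact hAred
    have hC''dvd : ∀ i i', (p:ZMod (p^k))^(j+1) ∣ (A''ᵀ*B*A'' - B) i i' := by
      intro i i'
      rw [hiso'']
      have h1 : ∀ a b, (p:ZMod (p^k))^j ∣ Yᵀ a b := by
        intro a b; rw [Matrix.transpose_apply]; exact hYdvd b a
      have h2' : ∀ a b, (p:ZMod (p^k))^j ∣ (G*Y) a b := dvd_mul_entries_right _ G Y hYdvd
      have hboth := dvd_mul_entries_both ((p:ZMod (p^k))^j) ((p:ZMod (p^k))^j) Yᵀ (G*Y) h1 h2' i i'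
      rw [← pow_add] at hboth
      exact dvd_trans (pow_dvd_pow _ (by omega : j+1 ≤ j+j)) hboth
    obtain ⟨A', hiso, hunit, hclose⟩ := ih (j+1) (by omega) (by omega) A'' hA''det hC''dvd
    refine ⟨A', hiso, hunit, fun i i' => ?_⟩
    have hsplit : A' - A = (A' - A'') + (A'' - A) := by abel
    rw [hsplit, Matrix.add_apply]
    apply dvd_add
    · exact dvd_trans (pow_dvd_pow _ (by omega)) (hclose i i')
    · have hAY : A'' - A = A * Y := by rw [hA'']; noncomm_ring
      rw [hAY]
      exact dvd_mul_entries_right _ A Y hYdvd i i'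

end newton
section final

variable {p k n : ℕ}

lemma map_red_one_of (hp : p.Prime) (hk : k ≠ 0) {A : Matrix (Fin n) (Fin n) (ZMod (p^k))}
    (h : ∀ i j, (p : ZMod (p^k)) ∣ (A - 1) i j) :
    A.map (ZMod.castHom (dvd_pow_self p hk) (ZMod p)) = 1 := by
  set g := ZMod.castHom (dvd_pow_self p hk) (ZMod p)
  have h0 : (A - 1).map g = 0 := entries_dvd_map_red_eq_zero hp hk _ h
  have : A.map g = ((A - 1) + 1).map g := by norm_num
  rw [this]
  show (g.mapMatrix) ((A-1) + 1) = 1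
  rw [map_add, _root_.map_one]
  show (A-1).map g + 1 = 1
  rw [h0, zero_add]

lemma isUnit_det_one_add_of_red_one (hp : p.Prime) (hp2 : p ≠ 2) (hk : k ≠ 0)
    {A : Matrix (Fin n) (Fin n) (ZMod (p^k))}
    (h : A.map (ZMod.castHom (dvd_pow_self p hk) (ZMod p)) = 1) :
    IsUnit (1 + A).det := by
  haveI : Fact p.Prime := ⟨hp⟩
  set g := ZMod.castHom (dvd_pow_self p hk) (ZMod p)
  apply isUnit_det_of_red hp hk
  have e : (1 + A).map g = (2 : ZMod p) • (1 : Matrix (Fin n) (Fin n) (ZMod p)) := by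
    show (g.mapMatrix) (1 + A) = _
    rw [map_add, _root_.map_one]
    show 1 + A.map g = _
    rw [h, two_smul]
  rw [e, Matrix.det_smul, Matrix.det_one, mul_one, Fintype.card_fin]
  have h2 : (2 : ZMod p) ≠ 0 := by
    rw [show (2 : ZMod p) = ((2:ℕ) : ZMod p) by push_cast; ring, ne_eq,
      ZMod.natCast_eq_zero_iff]
    intro hdvd
    exact hp2 ((Nat.prime_dvd_prime_iff_eq hp Nat.prime_two).mp hdvd)
  exact (isUnit_iff_ne_zero.mpr h2).pow n

lemma dvd_entries_of_red_one (hp : p.Prime) (hk : k ≠ 0)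
    {A : Matrix (Fin n) (Fin n) (ZMod (p^k))}
    (h : A.map (ZMod.castHom (dvd_pow_self p hk) (ZMod p)) = 1) :
    ∀ i j, (p : ZMod (p^k)) ∣ (1 - A) i j := by
  intro i j
  apply (red_eq_zero_iff' hp hk _).mp
  have : (1 - A).map (ZMod.castHom (dvd_pow_self p hk) (ZMod p)) = 0 := by
    show ((ZMod.castHom (dvd_pow_self p hk) (ZMod p)).mapMatrix) (1 - A) = 0
    rw [map_sub, _root_.map_one]
    show 1 - A.map (ZMod.castHom (dvd_pow_self p hk) (ZMod p)) = 0
    rw [h, sub_self]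
  calc (ZMod.castHom (dvd_pow_self p hk) (ZMod p)) ((1 - A) i j)
      = ((1 - A).map (ZMod.castHom (dvd_pow_self p hk) (ZMod p))) i j := rfl
    _ = 0 := by rw [this]; rfl

theorem stmt7 (p : ℕ) (hp : p.Prime) (hp2 : p ≠ 2) (k : ℕ) (hk : 1 ≤ k) (n : ℕ) (hn : 1 ≤ n)
    (B : Matrix (Fin n) (Fin n) (ZMod (p ^ k))) (hsymm : B.IsSymm) (hdet : IsUnit B.det) :
    Function.Surjective (redPi p k (by omega) B) ∧
      Nat.card (redPi p k (by omega) B).ker = p ^ ((k - 1) * (n * (n - 1) / 2)) := by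
  haveI : Fact p.Prime := ⟨hp⟩
  have hk' : k ≠ 0 := by omega
  set g := ZMod.castHom (dvd_pow_self p (hk' : k ≠ 0)) (ZMod p) with hgdef
  have hB : Bᵀ = B := hsymm
  have h2R : IsUnit (2 : ZMod (p^k)) := two_isUnit hp hp2 hk'
  -- surjectivity
  have hsurj : Function.Surjective (redPi p k hk' B) := by
    rintro ⟨y, hy⟩
    set A₀ := (y : Matrix (Fin n) (Fin n) (ZMod p)) with hA₀
    set A : Matrix (Fin n) (Fin n) (ZMod (p^k)) :=
      Matrix.of (fun i j => (((A₀ i j).val : ℕ) : ZMod (p^k))) with hA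
    have hmap : A.map g = A₀ := by
      ext i j
      rw [Matrix.map_apply]
      show g (((A₀ i j).val : ℕ) : ZMod (p^k)) = A₀ i j
      rw [map_natCast]
      exact ZMod.natCast_rightInverse (A₀ i j)
    have hA₀unit : IsUnit A₀.det := (Matrix.isUnit_iff_isUnit_det _).mp ⟨y, rfl⟩
    have hAdet : IsUnit A.det := isUnit_det_of_red hp hk' A (by rw [hmap]; exact hA₀unit)
    have hCdvd : ∀ i i', (p : ZMod (p^k))^1 ∣ (Aᵀ*B*A - B) i i' := by
      intro i i'
      rw [pow_one]
      apply (red_eq_zero_iff' hp hk' _).mp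
      have hmap0 : (Aᵀ*B*A - B).map g = 0 := by
        show (g.mapMatrix) (Aᵀ*B*A - B) = 0
        rw [map_sub, _root_.map_mul, _root_.map_mul]
        show (Aᵀ.map g) * (B.map g) * (A.map g) - B.map g = 0
        rw [show Aᵀ.map g = (A.map g)ᵀ from (Matrix.transpose_map).symm, hmap]
        rw [hA₀] at *
        have := hy
        rw [sub_eq_zero]
        exact this
      calc g ((Aᵀ*B*A - B) i i') = ((Aᵀ*B*A - B).map g) i i' := rfl
        _ = 0 := by rw [hmap0]; rfl
    obtain ⟨A', hiso, hunit, hclose⟩ :=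
      newton_lift hp hp2 hk' B hB hdet k 1 le_rfl (by omega) A hAdet hCdvd
    have hA'map : A'.map g = A₀ := by
      have h0 : (A' - A).map g = 0 := by
        apply entries_dvd_map_red_eq_zero hp hk'
        intro i j
        have := hclose i j
        rwa [pow_one] at this
      have : A' = (A' - A) + A := by abel
      rw [this]
      show (g.mapMatrix) ((A' - A) + A) = A₀
      rw [map_add]
      show (A' - A).map g + A.map g = A₀
      rw [h0, hmap, zero_add]
    have hU : IsUnit A' := (Matrix.isUnit_iff_isUnit_det _).mpr hunit
    obtain ⟨u, hu⟩ := hU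
    refine ⟨⟨u, show (↑u)ᵀ * B * ↑u = B by rw [hu]; exact hiso⟩, ?_⟩
    apply Subtype.ext
    apply Units.ext
    show ((↑u : Matrix (Fin n) (Fin n) (ZMod (p^k))).map g) = y
    rw [hu, hA'map]
  constructor
  · exact hsurj
  -- kernel cardinality
  · have memker : ∀ x : (redPi p k hk' B).ker,
        ((x : (OGroup B)) : (Matrix (Fin n) (Fin n) (ZMod (p^k)))ˣ).val.map g = 1 := by
      rintro ⟨x, hx⟩
      rw [MonoidHom.mem_ker] at hx
      have := congrArg (fun z => ((z : (OGroup (B.map g))) :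
        (Matrix (Fin n) (Fin n) (ZMod p))ˣ).val) hx
      exact this
    have hBinvsymm : (B⁻¹)ᵀ = B⁻¹ := by rw [Matrix.transpose_nonsing_inv, hB]
    have hdet1 : ∀ x : (redPi p k hk' B).ker,
        IsUnit (1 + ((x.1 : (Matrix (Fin n) (Fin n) (ZMod (p^k)))ˣ) : Matrix (Fin n) (Fin n) (ZMod (p^k)))).det :=
      fun x => isUnit_det_one_add_of_red_one hp hp2 hk' (memker x)
    have pf : ∀ x : (redPi p k hk' B).ker,
        (∀ i j, (p : ZMod (p^k)) ∣ (B * cayley ((x.1 : (Matrix (Fin n) (Fin n) (ZMod (p^k)))ˣ) : Matrix (Fin n) (Fin n) (ZMod (p^k)))) i j) ∧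
        (B * cayley ((x.1 : (Matrix (Fin n) (Fin n) (ZMod (p^k)))ˣ) : Matrix (Fin n) (Fin n) (ZMod (p^k))))ᵀ =
          -(B * cayley ((x.1 : (Matrix (Fin n) (Fin n) (ZMod (p^k)))ˣ) : Matrix (Fin n) (Fin n) (ZMod (p^k)))) := by
      intro x
      set A := ((x.1 : (Matrix (Fin n) (Fin n) (ZMod (p^k)))ˣ) : Matrix (Fin n) (Fin n) (ZMod (p^k))) with hAdef
      have hxiso : Aᵀ * B * A = B := x.1.2
      have hskew0 : (cayley A)ᵀ * B + B * (cayley A) = 0 :=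
        (cayley_isometry_iff B A h2R (hdet1 x)).mp hxiso
      have hTdvd : ∀ i j, (p : ZMod (p^k)) ∣ (cayley A) i j := by
        intro i j
        exact dvd_mul_entries_left _ (1 - A) (1+A)⁻¹
          (dvd_entries_of_red_one hp hk' (memker x)) i j
      constructor
      · exact dvd_mul_entries_right _ B (cayley A) hTdvd
      · rw [Matrix.transpose_mul, hB]
        exact eq_neg_of_add_eq_zero_left hskew0
    set F : (redPi p k hk' B).ker → {M : Matrix (Fin n) (Fin n) (ZMod (p^k)) //
        (∀ i j, (p : ZMod (p^k)) ∣ M i j) ∧ Mᵀ = -M} :=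
      fun x => ⟨B * cayley ((x.1 : (Matrix (Fin n) (Fin n) (ZMod (p^k)))ˣ) : Matrix (Fin n) (Fin n) (ZMod (p^k))), pf x⟩ with hF
    have hinj : Function.Injective F := by
      intro x y hxy
      have h1 : B * cayley ((x.1 : (Matrix (Fin n) (Fin n) (ZMod (p^k)))ˣ) : Matrix (Fin n) (Fin n) (ZMod (p^k)))
          = B * cayley ((y.1 : (Matrix (Fin n) (Fin n) (ZMod (p^k)))ˣ) : Matrix (Fin n) (Fin n) (ZMod (p^k))) :=
        congrArg Subtype.val hxy
      have h2 : cayley ((x.1 : (Matrix (Fin n) (Fin n) (ZMod (p^k)))ˣ) : Matrix (Fin n) (Fin n) (ZMod (p^k)))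
          = cayley ((y.1 : (Matrix (Fin n) (Fin n) (ZMod (p^k)))ˣ) : Matrix (Fin n) (Fin n) (ZMod (p^k))) := by
        have := congrArg (fun M => B⁻¹ * M) h1
        simpa only [← Matrix.mul_assoc, Matrix.nonsing_inv_mul _ hdet, Matrix.one_mul] using this
      have h3 := congrArg cayley h2
      rw [cayley_cayley _ h2R (hdet1 x), cayley_cayley _ h2R (hdet1 y)] at h3
      apply Subtype.ext
      apply Subtype.ext
      apply Units.ext
      exact h3
    have hsurjF : Function.Surjective F := by
      rintro ⟨M, hMdvd, hMskew⟩
      set T := B⁻¹ * M with hTdef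
      have hTdvd : ∀ i j, (p : ZMod (p^k)) ∣ T i j :=
        dvd_mul_entries_right _ B⁻¹ M hMdvd
      have hBT : B * T = M := by
        rw [hTdef, ← Matrix.mul_assoc, Matrix.mul_nonsing_inv _ hdet, Matrix.one_mul]
      have hTmap0 : T.map g = 0 := entries_dvd_map_red_eq_zero hp hk' T hTdvd
      have h1Tmap : ((1 : Matrix (Fin n) (Fin n) (ZMod (p^k))) + T).map g = 1 := by
        apply map_red_one_of hp hk'
        intro i j
        have e : (1 : Matrix (Fin n) (Fin n) (ZMod (p^k))) + T - 1 = T := by abel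
        rw [e]
        exact hTdvd i j
      have hdet1T : IsUnit ((1 : Matrix (Fin n) (Fin n) (ZMod (p^k))) + T).det := by
        apply isUnit_det_of_red hp hk'
        rw [h1Tmap, Matrix.det_one]
        exact isUnit_one
      set A' := cayley T with hA'def
      have hA'map : A'.map g = 1 := by
        rw [hA'def, cayley]
        have e1 : (((1 : Matrix (Fin n) (Fin n) (ZMod (p^k))) - T) * (1+T)⁻¹).map g
            = ((1 - T).map g) * (((1+T)⁻¹).map g) := Matrix.map_mul
        have e2 : (((1 : Matrix (Fin n) (Fin n) (ZMod (p^k))) + T)⁻¹).map g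
            = (((1+T).map g))⁻¹ := map_nonsing_inv g _ hdet1T
        have e3 : ((1 : Matrix (Fin n) (Fin n) (ZMod (p^k))) - T).map g = 1 := by
          show (g.mapMatrix) ((1 : Matrix (Fin n) (Fin n) (ZMod (p^k))) - T) = 1
          rw [map_sub, _root_.map_one]
          show 1 - T.map g = 1
          rw [hTmap0, sub_zero]
        rw [e1, e2, e3, h1Tmap, inv_one, Matrix.one_mul]
      have hA'det1 : IsUnit ((1 : Matrix (Fin n) (Fin n) (ZMod (p^k))) + A').det :=
        isUnit_det_one_add_of_red_one hp hp2 hk' hA'map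
      have hTskew : Tᵀ * B + B * T = 0 := by
        have hTt : Tᵀ = (-M) * B⁻¹ := by
          rw [hTdef, Matrix.transpose_mul, hBinvsymm, hMskew]
        rw [hTt, hBT, Matrix.mul_assoc, Matrix.nonsing_inv_mul _ hdet, Matrix.mul_one]
        exact neg_add_cancel M
      have hA'iso : A'ᵀ * B * A' = B := by
        apply (cayley_isometry_iff B A' h2R hA'det1).mpr
        rw [hA'def, cayley_cayley T h2R hdet1T]
        exact hTskew
      have hA'unit : IsUnit A' := by
        apply (Matrix.isUnit_iff_isUnit_det _).mpr
        apply isUnit_det_of_red hp hk'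
        rw [hA'map, Matrix.det_one]
        exact isUnit_one
      obtain ⟨u, hu⟩ := hA'unit
      have hmem : u ∈ OGroup B := by
        show (u.val)ᵀ * B * u.val = B
        rw [hu]
        exact hA'iso
      have hker : (⟨u, hmem⟩ : OGroup B) ∈ (redPi p k hk' B).ker := by
        rw [MonoidHom.mem_ker]
        apply Subtype.ext
        apply Units.ext
        show ((↑u : Matrix (Fin n) (Fin n) (ZMod (p^k))).map g) = 1
        rw [hu]
        exact hA'map
      refine ⟨⟨⟨u, hmem⟩, hker⟩, ?_⟩
      apply Subtype.ext
      show B * cayley (↑u : Matrix (Fin n) (Fin n) (ZMod (p^k))) = M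
      rw [hu, hA'def, cayley_cayley T h2R hdet1T, hBT]
    have hcard : Nat.card (redPi p k hk' B).ker
        = Nat.card {M : Matrix (Fin n) (Fin n) (ZMod (p^k)) //
            (∀ i j, (p : ZMod (p^k)) ∣ M i j) ∧ Mᵀ = -M} :=
      Nat.card_congr (Equiv.ofBijective F ⟨hinj, hsurjF⟩)
    rw [hcard, card_skew hp hp2 hk']

end final
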